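/- Suppose (V*, h*) minimizes the weighted augmented Lagrangian L_μ(V,h,x') = Σ_s ρ₀(s) V(s) + (1/(2μ)) Σ_{s,a} w(s,a) [Z_μ(V,h,x',s,a)]² over all V and all h ≥ 0. Then x(s,a) := Z_μ(V*,h*,x',s,a) is an optimal solution of the weighted proximal dual problem: maximize over x ≥ 0 satisfying Σ_{s,a}(δ_{s'}(s) − γ P(s'|s,a)) w(s,a) x(s,a) = ρ₀(s') for all s', the objective Σ_{s,a} r(s,a) w(s,a) x(s,a) − (1/(2μ)) Σ_{s,a} w(s,a)(x(s,a) − x'(s,a))². -/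

import Mathlib

/-- The Z-function `Z_μ(V,h,x',s,a)`. -/
def Zmu {S A : Type*} [Fintype S]
    (P : S → A → S → ℝ) (r : S → A → ℝ) (γ μ : ℝ)
    (V : S → ℝ) (h x' : S → A → ℝ) (s : S) (a : A) : ℝ :=
  x' s a + μ * (h s a + r s a + γ * (∑ s', P s a s' * V s') - V s)

/-- The weighted augmented Lagrangian `L_μ(V,h,x')`. -/
noncomputable def Lmu {S A : Type*} [Fintype S] [Fintype A]
    (P : S → A → S → ℝ) (r : S → A → ℝ) (ρ₀ : S → ℝ) (γ μ : ℝ)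
    (w : S → A → ℝ) (V : S → ℝ) (h x' : S → A → ℝ) : ℝ :=
  (∑ s, ρ₀ s * V s) +
    (1 / (2 * μ)) * ∑ s, ∑ a, w s a * (Zmu P r γ μ V h x' s a) ^ 2

lemma quad_zero {g K : ℝ} (hK : 0 ≤ K) (h : ∀ t : ℝ, 0 ≤ t*g + t^2*K) : g = 0 := by
  by_contra hg
  have hK1 : (0:ℝ) < K + 1 := by linarith
  have h1 := h (-g/(K+1))
  have h2 : -g/(K+1) * g + (-g/(K+1))^2 * K = -(g^2/(K+1)^2) := by
    field_simp; ring
  rw [h2] at h1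
  have : 0 < g^2/(K+1)^2 := by positivity
  linarith

lemma L_pert_h {S A : Type*} [Fintype S] [Fintype A] [DecidableEq S] [DecidableEq A]
    (P : S → A → S → ℝ) (r : S → A → ℝ) (ρ₀ : S → ℝ) (γ μ : ℝ) (hμ : μ ≠ 0)
    (w : S → A → ℝ) (V : S → ℝ) (h x' : S → A → ℝ) (s₀ : S) (a₀ : A) (t : ℝ) :
    Lmu P r ρ₀ γ μ w V
      (fun s a => h s a + if s = s₀ then (if a = a₀ then t else 0) else 0) x'
    = Lmu P r ρ₀ γ μ w V h x'
      + t * (w s₀ a₀ * Zmu P r γ μ V h x' s₀ a₀) + t^2 * (μ * w s₀ a₀ / 2) := by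
  have key : ∀ s a, w s a * (Zmu P r γ μ V
      (fun s a => h s a + if s = s₀ then (if a = a₀ then t else 0) else 0) x' s a) ^ 2
      = w s a * (Zmu P r γ μ V h x' s a) ^ 2 +
        (if s = s₀ then (if a = a₀ then
          2*μ*(w s₀ a₀)*(Zmu P r γ μ V h x' s₀ a₀)*t + μ^2*(w s₀ a₀)*t^2 else 0) else 0) := by
    intro s a
    by_cases hs : s = s₀
    · by_cases ha : a = a₀
      · subst hs; subst ha; simp [Zmu]; ring
      · simp [Zmu, hs, ha]
    · simp [Zmu, hs]
  simp only [Lmu, key, Finset.sum_add_distrib, Finset.sum_ite_eq, Finset.mem_univ, if_true,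
    Finset.sum_ite_irrel, Finset.sum_const_zero, Finset.sum_ite_eq']
  field_simp
  ring

lemma L_pert_V {S A : Type*} [Fintype S] [Fintype A] [DecidableEq S]
    (P : S → A → S → ℝ) (r : S → A → ℝ) (ρ₀ : S → ℝ) (γ μ : ℝ) (hμ : μ ≠ 0)
    (w : S → A → ℝ) (V : S → ℝ) (h x' : S → A → ℝ) (s₀ : S) (t : ℝ) :
    Lmu P r ρ₀ γ μ w (fun s => V s + if s = s₀ then t else 0) h x'
    = Lmu P r ρ₀ γ μ w V h x'
      + t * (ρ₀ s₀ + ∑ s, ∑ a, w s a * Zmu P r γ μ V h x' s a *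
          (γ * P s a s₀ - if s = s₀ then 1 else 0))
      + t^2 * ((μ/2) * ∑ s, ∑ a, w s a *
          (γ * P s a s₀ - if s = s₀ then 1 else 0)^2) := by
  have hZ : ∀ s a, Zmu P r γ μ (fun s => V s + if s = s₀ then t else 0) h x' s a
      = Zmu P r γ μ V h x' s a + t * μ * (γ * P s a s₀ - if s = s₀ then 1 else 0) := by
    intro s a
    have hsum : ∑ s', P s a s' * (V s' + if s' = s₀ then t else 0)
        = (∑ s', P s a s' * V s') + P s a s₀ * t := by
      simp [mul_add, Finset.sum_add_distrib, Finset.sum_ite_eq, mul_ite]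
    simp only [Zmu, hsum]
    by_cases hs : s = s₀ <;> simp [hs] <;> ring
  have key : ∀ s a, w s a * (Zmu P r γ μ (fun s => V s + if s = s₀ then t else 0) h x' s a) ^ 2
      = w s a * (Zmu P r γ μ V h x' s a) ^ 2
        + 2*t*μ*(w s a * Zmu P r γ μ V h x' s a * (γ * P s a s₀ - if s = s₀ then 1 else 0))
        + t^2*μ^2*(w s a * (γ * P s a s₀ - if s = s₀ then 1 else 0)^2) := by
    intro s a; rw [hZ]; ring
  have hρ : ∑ s, ρ₀ s * (V s + if s = s₀ then t else 0)
      = (∑ s, ρ₀ s * V s) + ρ₀ s₀ * t := by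
    simp [mul_add, Finset.sum_add_distrib, Finset.sum_ite_eq, mul_ite]
  simp only [Lmu, key, hρ, Finset.sum_add_distrib, ← Finset.mul_sum]
  field_simp
  ring


/-- If `(V*, h*)` minimizes the weighted augmented Lagrangian over `V` and
`h ≥ 0`, then `x := Z_μ(V*,h*,x',·)` is an optimal solution of the weighted
proximal dual problem. -/
theorem Z_of_alm_minimizer_solves_prox_dual
    {S A : Type*} [Fintype S] [Fintype A] [DecidableEq S]
    (P : S → A → S → ℝ) (hP : ∀ s a, ∑ s', P s a s' = 1)
    (r : S → A → ℝ)
    (ρ₀ : S → ℝ) (hρ₀ : ∀ s, 0 ≤ ρ₀ s) (hρsum : ∑ s, ρ₀ s = 1)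
    (γ : ℝ) (hγ : 0 < γ) (hγ1 : γ < 1)
    (w : S → A → ℝ) (hw : ∀ s a, 0 < w s a) (hwsum : ∑ s, ∑ a, w s a = 1)
    (μ : ℝ) (hμ : 0 < μ)
    (x' : S → A → ℝ)
    (Vstar : S → ℝ) (hstar : S → A → ℝ)
    (hstar_nonneg : ∀ s a, 0 ≤ hstar s a)
    (hmin : ∀ (V : S → ℝ) (h : S → A → ℝ), (∀ s a, 0 ≤ h s a) →
      Lmu P r ρ₀ γ μ w Vstar hstar x' ≤ Lmu P r ρ₀ γ μ w V h x') :
    -- feasibility of x := Z_μ(V*,h*,x',·)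
    ((∀ s a, 0 ≤ Zmu P r γ μ Vstar hstar x' s a) ∧
      (∀ s' : S, ∑ s, ∑ a,
          ((if s = s' then (1 : ℝ) else 0) - γ * P s a s') * w s a *
            Zmu P r γ μ Vstar hstar x' s a = ρ₀ s'))
    ∧
    -- optimality among all feasible x
    (∀ x : S → A → ℝ, (∀ s a, 0 ≤ x s a) →
      (∀ s' : S, ∑ s, ∑ a,
          ((if s = s' then (1 : ℝ) else 0) - γ * P s a s') * w s a *
            x s a = ρ₀ s') →
      (∑ s, ∑ a, r s a * w s a * x s a)
        - (1 / (2 * μ)) * ∑ s, ∑ a, w s a * (x s a - x' s a) ^ 2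
      ≤ (∑ s, ∑ a, r s a * w s a * Zmu P r γ μ Vstar hstar x' s a)
        - (1 / (2 * μ)) * ∑ s, ∑ a,
            w s a * (Zmu P r γ μ Vstar hstar x' s a - x' s a) ^ 2) := by
  classical
  have hμ' : μ ≠ 0 := hμ.ne'
  -- nonnegativity of Z
  have Znn : ∀ s a, 0 ≤ Zmu P r γ μ Vstar hstar x' s a := by
    intro s₀ a₀
    by_contra hneg
    push_neg at hneg
    set Z0 := Zmu P r γ μ Vstar hstar x' s₀ a₀ with hZ0
    set t : ℝ := -Z0 / μ with ht
    have htpos : 0 < t := div_pos (neg_pos.2 hneg) hμ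
    have hh : ∀ s a, 0 ≤ hstar s a + if s = s₀ then (if a = a₀ then t else 0) else 0 := by
      intro s a
      have h0 := hstar_nonneg s a
      split_ifs <;> linarith
    have hle := hmin Vstar _ hh
    rw [L_pert_h P r ρ₀ γ μ hμ' w Vstar hstar x' s₀ a₀ t] at hle
    have h2 : 0 ≤ t * (w s₀ a₀ * Z0) + t^2*(μ*w s₀ a₀/2) := by linarith
    have h3 : t * (w s₀ a₀ * Z0) + t^2*(μ*w s₀ a₀/2) = -(w s₀ a₀ * Z0^2/(2*μ)) := by
      rw [ht]; field_simp; ring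
    have h4 : 0 < w s₀ a₀ * Z0^2/(2*μ) := by
      have hw0 := hw s₀ a₀
      have hz2 : 0 < Z0^2 := by nlinarith
      exact div_pos (mul_pos hw0 hz2) (by linarith)
    linarith [h3 ▸ h2]
  -- complementarity
  have comp : ∀ s a, hstar s a * Zmu P r γ μ Vstar hstar x' s a = 0 := by
    intro s₀ a₀
    by_contra hne
    set Z0 := Zmu P r γ μ Vstar hstar x' s₀ a₀ with hZ0
    have hZpos : 0 < Z0 := lt_of_le_of_ne (Znn s₀ a₀) fun h => hne (by rw [← h]; ring)
    have hhpos : 0 < hstar s₀ a₀ := lt_of_le_of_ne (hstar_nonneg s₀ a₀) fun h => hne (by rw [← h]; ring)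
    set t : ℝ := -min (Z0 / μ) (hstar s₀ a₀) with ht
    have hmin0 : 0 < min (Z0 / μ) (hstar s₀ a₀) := lt_min (div_pos hZpos hμ) hhpos
    have htneg : t < 0 := by rw [ht]; linarith
    have htge : -(hstar s₀ a₀) ≤ t := by
      rw [ht]; exact neg_le_neg (min_le_right _ _)
    have htge2 : -(Z0/μ) ≤ t := by
      rw [ht]; exact neg_le_neg (min_le_left _ _)
    have hh : ∀ s a, 0 ≤ hstar s a + if s = s₀ then (if a = a₀ then t else 0) else 0 := by
      intro s a
      have h0 := hstar_nonneg s a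
      split_ifs with h1 h2
      · subst h1; subst h2; linarith
      · linarith
      · linarith
    have hle := hmin Vstar _ hh
    rw [L_pert_h P r ρ₀ γ μ hμ' w Vstar hstar x' s₀ a₀ t] at hle
    have h2 : 0 ≤ t * (w s₀ a₀ * Z0) + t^2*(μ*w s₀ a₀/2) := by linarith
    have hZhalf : 0 < Z0 + t*μ/2 := by
      have : -(Z0/μ) * μ = -Z0 := by field_simp
      nlinarith [mul_le_mul_of_nonneg_right htge2 hμ.le]
    have : t * (w s₀ a₀ * Z0) + t^2*(μ*w s₀ a₀/2) = t * (w s₀ a₀ * (Z0 + t*μ/2)) := by ring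
    nlinarith [mul_pos (hw s₀ a₀) hZhalf, mul_neg_of_neg_of_pos htneg (mul_pos (hw s₀ a₀) hZhalf)]
  -- feasibility
  have feas : ∀ s' : S, ∑ s, ∑ a,
      ((if s = s' then (1 : ℝ) else 0) - γ * P s a s') * w s a *
        Zmu P r γ μ Vstar hstar x' s a = ρ₀ s' := by
    intro s₀
    set g : ℝ := ρ₀ s₀ + ∑ s, ∑ a, w s a * Zmu P r γ μ Vstar hstar x' s a *
        (γ * P s a s₀ - if s = s₀ then 1 else 0) with hg
    set K : ℝ := (μ/2) * ∑ s, ∑ a, w s a * (γ * P s a s₀ - if s = s₀ then 1 else 0)^2 with hK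
    have hKnn : 0 ≤ K := by
      rw [hK]
      apply mul_nonneg (by linarith)
      apply Finset.sum_nonneg; intro s _
      apply Finset.sum_nonneg; intro a _
      exact mul_nonneg (hw s a).le (sq_nonneg _)
    have hgzero : g = 0 := by
      apply quad_zero hKnn
      intro t
      have hle := hmin (fun s => Vstar s + if s = s₀ then t else 0) hstar hstar_nonneg
      rw [L_pert_V P r ρ₀ γ μ hμ' w Vstar hstar x' s₀ t] at hle
      rw [hg, hK]
      linarith
    have hsplit : ∑ s, ∑ a, ((if s = s₀ then (1 : ℝ) else 0) - γ * P s a s₀) * w s a *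
        Zmu P r γ μ Vstar hstar x' s a
        = -∑ s, ∑ a, w s a * Zmu P r γ μ Vstar hstar x' s a *
            (γ * P s a s₀ - if s = s₀ then 1 else 0) := by
      rw [← Finset.sum_neg_distrib]
      apply Finset.sum_congr rfl; intro s _
      rw [← Finset.sum_neg_distrib]
      apply Finset.sum_congr rfl; intro a _
      ring
    rw [hsplit]
    have : ∑ s, ∑ a, w s a * Zmu P r γ μ Vstar hstar x' s a *
        (γ * P s a s₀ - if s = s₀ then 1 else 0) = -ρ₀ s₀ := by
      have := hgzero; rw [hg] at this; linarith
    rw [this]; ring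
  refine ⟨⟨Znn, feas⟩, ?_⟩
  intro x xnn xfeas
  -- pointwise key identity
  have key : ∀ s a,
      r s a * w s a * Zmu P r γ μ Vstar hstar x' s a
        - (1/(2*μ)) * (w s a * (Zmu P r γ μ Vstar hstar x' s a - x' s a)^2)
        - (r s a * w s a * x s a - (1/(2*μ)) * (w s a * (x s a - x' s a)^2))
      = w s a * hstar s a * x s a
        + (∑ s', ((if s = s' then (1:ℝ) else 0) - γ * P s a s') * w s a *
            (Zmu P r γ μ Vstar hstar x' s a - x s a) * Vstar s')
        + (1/(2*μ)) * (w s a * (x s a - Zmu P r γ μ Vstar hstar x' s a)^2) := by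
    intro s a
    have hsum : ∑ s', ((if s = s' then (1:ℝ) else 0) - γ * P s a s') * w s a *
        (Zmu P r γ μ Vstar hstar x' s a - x s a) * Vstar s'
        = w s a * (Zmu P r γ μ Vstar hstar x' s a - x s a) *
            (Vstar s - γ * ∑ s', P s a s' * Vstar s') := by
      have e : ∀ s' ∈ Finset.univ, ((if s = s' then (1:ℝ) else 0) - γ * P s a s') * w s a *
          (Zmu P r γ μ Vstar hstar x' s a - x s a) * Vstar s'
          = (if s = s' then w s a * (Zmu P r γ μ Vstar hstar x' s a - x s a) * Vstar s' else 0)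
            - (γ * (w s a * (Zmu P r γ μ Vstar hstar x' s a - x s a))) * (P s a s' * Vstar s') := by
        intro s' _
        by_cases hss : s = s' <;> simp [hss] <;> ring
      rw [Finset.sum_congr rfl e, Finset.sum_sub_distrib, Finset.sum_ite_eq, ← Finset.mul_sum]
      simp only [Finset.mem_univ, if_true]
      ring
    rw [hsum]
    have hc := comp s a
    have hX : Zmu P r γ μ Vstar hstar x' s a
        = x' s a + μ*(hstar s a + r s a + γ*(∑ s', P s a s' * Vstar s') - Vstar s) := rfl
    rw [hX] at hc ⊢
    field_simp
    linear_combination (-2*μ*(w s a)) * hc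
  have Hsum : ∑ s, ∑ a, (r s a * w s a * Zmu P r γ μ Vstar hstar x' s a
        - (1/(2*μ)) * (w s a * (Zmu P r γ μ Vstar hstar x' s a - x' s a)^2)
        - (r s a * w s a * x s a - (1/(2*μ)) * (w s a * (x s a - x' s a)^2)))
      = ∑ s, ∑ a, (w s a * hstar s a * x s a
        + (∑ s', ((if s = s' then (1:ℝ) else 0) - γ * P s a s') * w s a *
            (Zmu P r γ μ Vstar hstar x' s a - x s a) * Vstar s')
        + (1/(2*μ)) * (w s a * (x s a - Zmu P r γ μ Vstar hstar x' s a)^2)) :=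
    Finset.sum_congr rfl fun s _ => Finset.sum_congr rfl fun a _ => key s a
  have hT2 : ∑ s, ∑ a, ∑ s', ((if s = s' then (1:ℝ) else 0) - γ * P s a s') * w s a *
      (Zmu P r γ μ Vstar hstar x' s a - x s a) * Vstar s' = 0 := by
    have swap1 : ∑ s, ∑ a, ∑ s', ((if s = s' then (1:ℝ) else 0) - γ * P s a s') * w s a *
        (Zmu P r γ μ Vstar hstar x' s a - x s a) * Vstar s'
        = ∑ s' : S, ∑ s, ∑ a, ((if s = s' then (1:ℝ) else 0) - γ * P s a s') * w s a *
            (Zmu P r γ μ Vstar hstar x' s a - x s a) * Vstar s' := by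
      rw [Finset.sum_congr rfl fun s (_ : s ∈ Finset.univ) =>
        (Finset.sum_comm : ∑ a : A, ∑ s' : S, ((if s = s' then (1:ℝ) else 0) - γ * P s a s') * w s a *
            (Zmu P r γ μ Vstar hstar x' s a - x s a) * Vstar s'
          = ∑ s' : S, ∑ a : A, ((if s = s' then (1:ℝ) else 0) - γ * P s a s') * w s a *
            (Zmu P r γ μ Vstar hstar x' s a - x s a) * Vstar s')]
      exact Finset.sum_comm
    rw [swap1]
    apply Finset.sum_eq_zero
    intro s' _
    have e : ∀ s ∈ Finset.univ, ∀ a ∈ Finset.univ,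
        ((if s = s' then (1:ℝ) else 0) - γ * P s a s') * w s a *
          (Zmu P r γ μ Vstar hstar x' s a - x s a) * Vstar s'
        = ((if s = s' then (1:ℝ) else 0) - γ * P s a s') * w s a *
            Zmu P r γ μ Vstar hstar x' s a * Vstar s'
          - ((if s = s' then (1:ℝ) else 0) - γ * P s a s') * w s a * x s a * Vstar s' := by
      intro s _ a _; ring
    rw [Finset.sum_congr rfl fun s hs => Finset.sum_congr rfl (e s hs)]
    simp only [Finset.sum_sub_distrib, ← Finset.sum_mul]
    rw [feas s', xfeas s']
    ring
  have hT1 : 0 ≤ ∑ s, ∑ a, w s a * hstar s a * x s a := by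
    apply Finset.sum_nonneg; intro s _
    apply Finset.sum_nonneg; intro a _
    exact mul_nonneg (mul_nonneg (hw s a).le (hstar_nonneg s a)) (xnn s a)
  have hT3 : 0 ≤ ∑ s, ∑ a, w s a * (x s a - Zmu P r γ μ Vstar hstar x' s a)^2 := by
    apply Finset.sum_nonneg; intro s _
    apply Finset.sum_nonneg; intro a _
    exact mul_nonneg (hw s a).le (sq_nonneg _)
  have hc0 : (0:ℝ) ≤ 1/(2*μ) := by positivity
  have hLHS : ∑ s, ∑ a, (r s a * w s a * Zmu P r γ μ Vstar hstar x' s a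
        - (1/(2*μ)) * (w s a * (Zmu P r γ μ Vstar hstar x' s a - x' s a)^2)
        - (r s a * w s a * x s a - (1/(2*μ)) * (w s a * (x s a - x' s a)^2)))
      = ((∑ s, ∑ a, r s a * w s a * Zmu P r γ μ Vstar hstar x' s a)
          - (1 / (2 * μ)) * ∑ s, ∑ a, w s a * (Zmu P r γ μ Vstar hstar x' s a - x' s a) ^ 2)
        - ((∑ s, ∑ a, r s a * w s a * x s a)
          - (1 / (2 * μ)) * ∑ s, ∑ a, w s a * (x s a - x' s a) ^ 2) := by
    simp only [Finset.sum_sub_distrib, ← Finset.mul_sum]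
  have hRHS : ∑ s, ∑ a, (w s a * hstar s a * x s a
        + (∑ s', ((if s = s' then (1:ℝ) else 0) - γ * P s a s') * w s a *
            (Zmu P r γ μ Vstar hstar x' s a - x s a) * Vstar s')
        + (1/(2*μ)) * (w s a * (x s a - Zmu P r γ μ Vstar hstar x' s a)^2))
      = (∑ s, ∑ a, w s a * hstar s a * x s a)
        + (∑ s, ∑ a, ∑ s', ((if s = s' then (1:ℝ) else 0) - γ * P s a s') * w s a *
            (Zmu P r γ μ Vstar hstar x' s a - x s a) * Vstar s')
        + (1/(2*μ)) * ∑ s, ∑ a, w s a * (x s a - Zmu P r γ μ Vstar hstar x' s a)^2 := by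
    simp only [Finset.sum_add_distrib, ← Finset.mul_sum]
  rw [hLHS, hRHS, hT2] at Hsum
  nlinarith [mul_nonneg hc0 hT3]
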